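/- arXiv:1503.03773 — 3 statements merged into one kernel-verified Lean document; each statement's English description precedes it below -/
import Mathlib

section
/- Let G be a symmetric positive semidefinite K×K matrix, b ∈ ℝ^K, μ > 0, and define L(x) = (1/2) xᵀ G x - bᵀ x + μ‖x‖₁. Let x, x̂ ∈ ℝ^K and suppose that for every k, x̂ₖ minimizes over y the function (1/2) G_{kk} y² - (bₖ - Σ_{j≠k} G_{kj} xⱼ) y + μ|y| + (1/2) cₖ (y - xₖ)², with cₖ ≥ 0 and G_{kk} + cₖ > 0. Then for all γ ∈ [0,1]: L(x + γ(x̂ - x)) - L(x) ≤ -γ (c_min - (γ/2) λ_max(G)) ‖x̂ - x‖₂², where c_min = min_k (G_{kk} + cₖ) and λ_max(G) is the largest eigenvalue of G. -/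
open Matrix

/-- At a minimizer `q` of `y ↦ ½ a y² + p y + m |y|`, the "directional derivative"
toward any `y` is nonnegative. -/
lemma aux_min (a p m q : ℝ) (ha : 0 < a) (hm : 0 ≤ m)
    (hmin : ∀ y : ℝ, (1/2)*a*q^2 + p*q + m*|q| ≤ (1/2)*a*y^2 + p*y + m*|y|)
    (y : ℝ) :
    0 ≤ a*q*(y-q) + p*(y-q) + m*(|y| - |q|) := by
  have key : ∀ t : ℝ, 0 < t → t ≤ 1 →
      -(1/2)*a*t*(y-q)^2 ≤ a*q*(y-q) + p*(y-q) + m*(|y| - |q|) := by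
    intro t ht ht1
    have habs : |q + t*(y-q)| ≤ (1-t)*|q| + t*|y| := by
      have he : q + t*(y-q) = (1-t)*q + t*y := by ring
      rw [he]
      calc |(1-t)*q + t*y| ≤ |(1-t)*q| + |t*y| := abs_add_le _ _
        _ = (1-t)*|q| + t*|y| := by
            rw [abs_mul, abs_mul, abs_of_nonneg (by linarith : (0:ℝ) ≤ 1 - t),
              abs_of_nonneg ht.le]
    have h1 := hmin (q + t*(y-q))
    have h2 : m * |q + t*(y-q)| ≤ m * ((1-t)*|q| + t*|y|) :=
      mul_le_mul_of_nonneg_left habs hm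
    have h3 : 0 ≤ t*(a*q*(y-q) + p*(y-q) + m*(|y| - |q|)) + (1/2)*a*t^2*(y-q)^2 := by
      nlinarith [h1, h2]
    nlinarith [h3, ht, mul_pos ht ht]
  by_contra hcon
  push_neg at hcon
  set S : ℝ := a*q*(y-q) + p*(y-q) + m*(|y| - |q|) with hS
  by_cases hd0 : y - q = 0
  · have hyq : y = q := by linarith
    have : S = 0 := by rw [hS, hyq]; ring
    linarith
  · have hdpos : 0 < a*(y-q)^2 := by positivity
    have htpos : 0 < min 1 (-S/(a*(y-q)^2)) :=
      lt_min one_pos (div_pos (by linarith) hdpos)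
    have ht1 : min 1 (-S/(a*(y-q)^2)) ≤ 1 := min_le_left _ _
    have ht2 : min 1 (-S/(a*(y-q)^2)) ≤ -S/(a*(y-q)^2) := min_le_right _ _
    have ht3 : (min 1 (-S/(a*(y-q)^2))) * (a*(y-q)^2) ≤ -S := by
      rw [← le_div_iff₀ hdpos]; exact ht2
    have hk := key _ htpos ht1
    nlinarith [hk, ht3]

lemma aux_dotsymm {n : Type*} [Fintype n] (A : Matrix n n ℝ) (hA : Aᵀ = A) (u v : n → ℝ) :
    u ⬝ᵥ A *ᵥ v = v ⬝ᵥ A *ᵥ u := by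
  nth_rewrite 1 [← hA]
  rw [Matrix.mulVec_transpose, dotProduct_comm, ← Matrix.dotProduct_mulVec]

lemma aux_rayleigh {n : Type*} [Fintype n] [DecidableEq n] (A : Matrix n n ℝ)
    (hA : A.IsHermitian) (lam : ℝ) (hl : ∀ i, hA.eigenvalues i ≤ lam) (d : n → ℝ) :
    d ⬝ᵥ A *ᵥ d ≤ lam * ∑ i, d i ^ 2 := by
  set V : Matrix n n ℝ := (hA.eigenvectorUnitary : Matrix n n ℝ) with hVdef
  have hVs : V * star V = 1 := (Matrix.mem_unitaryGroup_iff).mp hA.eigenvectorUnitary.2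
  set w : n → ℝ := star V *ᵥ d with hw
  have hDiag : A = V * Matrix.diagonal hA.eigenvalues * star V := by
    have h := hA.spectral_theorem
    simpa using h
  have hstar : star V = Vᵀ := by
    rw [Matrix.star_eq_conjTranspose, Matrix.conjTranspose_eq_transpose_of_trivial]
  have h1 : d ⬝ᵥ A *ᵥ d = ∑ i, hA.eigenvalues i * w i ^ 2 := by
    conv_lhs => rw [hDiag]
    rw [← Matrix.mulVec_mulVec, ← Matrix.mulVec_mulVec, Matrix.dotProduct_mulVec]
    have hv : d ᵥ* V = w := by
      rw [hw, hstar, Matrix.mulVec_transpose]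
    rw [hv, ← hw]
    simp only [dotProduct, Matrix.mulVec_diagonal]
    exact Finset.sum_congr rfl (fun i _ => by ring)
  have h2 : ∑ i, d i ^ 2 = ∑ i, w i ^ 2 := by
    have hww : w ⬝ᵥ w = d ⬝ᵥ d := by
      nth_rewrite 2 [hw]
      rw [Matrix.dotProduct_mulVec]
      have hwv : w ᵥ* (star V) = d := by
        rw [hstar, Matrix.vecMul_transpose, hw, hstar, Matrix.mulVec_mulVec, ← hstar, hVs,
          Matrix.one_mulVec]
      rw [hwv]
    have hd2 : d ⬝ᵥ d = ∑ i, d i ^ 2 := by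
      simp [dotProduct, sq]
    have hw2 : w ⬝ᵥ w = ∑ i, w i ^ 2 := by
      simp [dotProduct, sq]
    rw [← hd2, ← hww, hw2]
  rw [h1, h2, Finset.mul_sum]
  exact Finset.sum_le_sum (fun i _ =>
    mul_le_mul_of_nonneg_right (hl i) (sq_nonneg _))

theorem stmt_2 (K : ℕ) (hK : 0 < K) (G : Matrix (Fin K) (Fin K) ℝ) (hG : G.PosSemidef)
    (b : Fin K → ℝ) (μ : ℝ) (hμ : 0 < μ) (x xh c : Fin K → ℝ)
    (hc : ∀ k, 0 ≤ c k) (hGc : ∀ k, 0 < G k k + c k)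
    (hbr : ∀ k, ∀ y : ℝ,
      (1/2) * G k k * (xh k)^2 - (b k - ∑ j ∈ Finset.univ.erase k, G k j * x j) * xh k
        + μ * |xh k| + (1/2) * c k * (xh k - x k)^2
      ≤ (1/2) * G k k * y^2 - (b k - ∑ j ∈ Finset.univ.erase k, G k j * x j) * y
        + μ * |y| + (1/2) * c k * (y - x k)^2)
    (γ : ℝ) (hγ : γ ∈ Set.Icc (0:ℝ) 1) :
    ((1/2) * ((x + γ • (xh - x)) ⬝ᵥ G.mulVec (x + γ • (xh - x)))
        - b ⬝ᵥ (x + γ • (xh - x)) + μ * ∑ i, |(x + γ • (xh - x)) i|)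
      - ((1/2) * (x ⬝ᵥ G.mulVec x) - b ⬝ᵥ x + μ * ∑ i, |x i|)
    ≤ -γ * ((Finset.univ.inf' (Finset.univ_nonempty_iff.mpr ⟨⟨0, hK⟩⟩)
          (fun k => G k k + c k))
        - (1/2) * (Finset.univ.sup' (Finset.univ_nonempty_iff.mpr ⟨⟨0, hK⟩⟩)
          hG.1.eigenvalues) * γ)
      * ∑ i, (xh i - x i)^2 := by
  obtain ⟨hγ0, hγ1⟩ := hγ
  have hGsym : Gᵀ = G := by
    have h := hG.1
    rwa [Matrix.IsHermitian, Matrix.conjTranspose_eq_transpose_of_trivial] at h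
  set ne1 := (Finset.univ_nonempty_iff (α := Fin K)).mpr ⟨⟨0, hK⟩⟩ with hne1
  set emin : ℝ := Finset.univ.inf' ne1 (fun k => G k k + c k) with hemin
  set lam : ℝ := Finset.univ.sup' ne1 hG.1.eigenvalues with hlam
  set S : ℝ := ∑ i, (xh i - x i)^2 with hSdef
  have hSnn : 0 ≤ S := Finset.sum_nonneg (fun i _ => sq_nonneg _)
  set T1 : ℝ := (xh - x) ⬝ᵥ G *ᵥ x with hT1
  set T2 : ℝ := (xh - x) ⬝ᵥ G *ᵥ (xh - x) with hT2
  -- quadratic expansion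
  have hquad : (x + γ • (xh - x)) ⬝ᵥ G.mulVec (x + γ • (xh - x))
      = x ⬝ᵥ G *ᵥ x + 2*γ*T1 + γ^2 * T2 := by
    rw [Matrix.mulVec_add, Matrix.mulVec_smul]
    simp only [dotProduct_add, add_dotProduct, dotProduct_smul,
      smul_dotProduct, smul_eq_mul]
    rw [aux_dotsymm G hGsym x (xh - x)]
    rw [hT1, hT2]; ring
  have hb : b ⬝ᵥ (x + γ • (xh - x)) = b ⬝ᵥ x + γ * (b ⬝ᵥ (xh - x)) := by
    simp only [dotProduct_add, dotProduct_smul, smul_eq_mul]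
  -- ℓ1 convexity
  have habs : ∑ i, |(x + γ • (xh - x)) i| - ∑ i, |x i|
      ≤ γ * (∑ i, |xh i| - ∑ i, |x i|) := by
    have hi : ∀ i, |(x + γ • (xh - x)) i| ≤ |x i| + γ * (|xh i| - |x i|) := by
      intro i
      have he : (x + γ • (xh - x)) i = (1-γ)*(x i) + γ*(xh i) := by
        simp [Pi.add_apply, Pi.smul_apply, Pi.sub_apply, smul_eq_mul]; ring
      rw [he]
      calc |(1-γ)*(x i) + γ*(xh i)| ≤ |(1-γ)*(x i)| + |γ*(xh i)| := abs_add_le _ _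
        _ = (1-γ)*|x i| + γ*|xh i| := by
            rw [abs_mul, abs_mul, abs_of_nonneg (by linarith : (0:ℝ) ≤ 1 - γ),
              abs_of_nonneg hγ0]
        _ = |x i| + γ * (|xh i| - |x i|) := by ring
    have hsum := Finset.sum_le_sum (fun i (_ : i ∈ Finset.univ) => hi i)
    rw [Finset.sum_add_distrib] at hsum
    have hdist : ∑ i, γ * (|xh i| - |x i|) = γ * (∑ i, |xh i| - ∑ i, |x i|) := by
      rw [← Finset.mul_sum, Finset.sum_sub_distrib]
    rw [hdist] at hsum
    linarith
  -- per-coordinate inequality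
  have hkey : ∀ k, ((G *ᵥ x) k - b k) * (xh k - x k) + μ * (|xh k| - |x k|)
      ≤ -(G k k + c k) * (xh k - x k)^2 := by
    intro k
    have hmin : ∀ y : ℝ,
        (1/2)*(G k k + c k)*(xh k)^2
            + (-(b k - ∑ j ∈ Finset.univ.erase k, G k j * x j) - c k * x k)*(xh k)
            + μ*|xh k|
        ≤ (1/2)*(G k k + c k)*y^2
            + (-(b k - ∑ j ∈ Finset.univ.erase k, G k j * x j) - c k * x k)*y
            + μ*|y| := by
      intro y
      have h := hbr k y
      have e1 : (1/2) * G k k * y^2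
            - (b k - ∑ j ∈ Finset.univ.erase k, G k j * x j) * y
            + μ * |y| + (1/2) * c k * (y - x k)^2
          = (1/2)*(G k k + c k)*y^2
            + (-(b k - ∑ j ∈ Finset.univ.erase k, G k j * x j) - c k * x k)*y
            + μ*|y| + (1/2)*(c k)*(x k)^2 := by ring
      have e2 : (1/2) * G k k * (xh k)^2
            - (b k - ∑ j ∈ Finset.univ.erase k, G k j * x j) * (xh k)
            + μ * |xh k| + (1/2) * c k * (xh k - x k)^2
          = (1/2)*(G k k + c k)*(xh k)^2
            + (-(b k - ∑ j ∈ Finset.univ.erase k, G k j * x j) - c k * x k)*(xh k)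
            + μ*|xh k| + (1/2)*(c k)*(x k)^2 := by ring
      rw [e1, e2] at h
      linarith
    have hS0 := aux_min (G k k + c k)
      (-(b k - ∑ j ∈ Finset.univ.erase k, G k j * x j) - c k * x k) μ (xh k)
      (hGc k) hμ.le hmin (x k)
    have hGx : (G *ᵥ x) k = G k k * x k + ∑ j ∈ Finset.univ.erase k, G k j * x j := by
      simp only [Matrix.mulVec, dotProduct]
      exact (Finset.add_sum_erase _ _ (Finset.mem_univ k)).symm
    rw [hGx]
    nlinarith [hS0]
  -- summed inequality
  have hsum : T1 - b ⬝ᵥ (xh - x) + μ * (∑ i, |xh i| - ∑ i, |x i|)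
      ≤ -emin * S := by
    have e0 : μ * (∑ i, |xh i| - ∑ i, |x i|) = ∑ i, μ*(|xh i| - |x i|) := by
      rw [← Finset.sum_sub_distrib, Finset.mul_sum]
    have e1 : T1 = ∑ k, (xh k - x k) * (G *ᵥ x) k := by
      rw [hT1]; simp [dotProduct]
    have e2 : b ⬝ᵥ (xh - x) = ∑ k, b k * (xh k - x k) := by
      simp [dotProduct]
    rw [e0, e1, e2, ← Finset.sum_sub_distrib, ← Finset.sum_add_distrib, hSdef,
      Finset.mul_sum]
    apply Finset.sum_le_sum
    intro k _
    have h1 := hkey k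
    have h2 : emin ≤ G k k + c k := Finset.inf'_le _ (Finset.mem_univ k)
    nlinarith [h1, h2, sq_nonneg (xh k - x k)]
  -- Rayleigh bound
  have hray : T2 ≤ lam * S := by
    have h := aux_rayleigh G hG.1 lam
      (fun i => Finset.le_sup' hG.1.eigenvalues (Finset.mem_univ i)) (xh - x)
    have hsum2 : ∑ i, ((xh - x) i)^2 = S := by
      rw [hSdef]
      exact Finset.sum_congr rfl (fun i _ => by simp)
    rw [hT2, ← hsum2]
    exact h
  -- assemble
  rw [hquad, hb]
  have hA : γ * (T1 - b ⬝ᵥ (xh - x) + μ * (∑ i, |xh i| - ∑ i, |x i|)) ≤ γ * (-emin * S) :=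
    mul_le_mul_of_nonneg_left hsum hγ0
  have hB : (1/2)*γ^2 * T2 ≤ (1/2)*γ^2 * (lam * S) :=
    mul_le_mul_of_nonneg_left hray (by positivity)
  have hC : μ * (∑ i, |(x + γ • (xh - x)) i| - ∑ i, |x i|)
      ≤ μ * (γ * (∑ i, |xh i| - ∑ i, |x i|)) :=
    mul_le_mul_of_nonneg_left habs hμ.le
  nlinarith [hA, hB, hC]
end

section
/- Let G be symmetric positive semidefinite, x, x̂ ∈ ℝ^K, and suppose for every k that (1/2)G_{kk}x̂ₖ² - rₖx̂ₖ + μ|x̂ₖ| + (1/2)cₖ(x̂ₖ - xₖ)² ≤ (1/2)G_{kk}xₖ² - rₖxₖ + μ|xₖ|, where rₖ = bₖ - Σ_{j≠k}G_{kj}xⱼ, cₖ ≥ 0, μ > 0. Then (Gx - b)ᵀ(x̂ - x) + μ(‖x̂‖₁ - ‖x‖₁) ≤ -Σ_k (G_{kk}/2 + cₖ/2)(x̂ₖ - xₖ)². -/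
open Matrix

theorem stmt_15 (K : ℕ) (G : Matrix (Fin K) (Fin K) ℝ) (hG : G.PosSemidef)
    (b x xh c : Fin K → ℝ) (μ : ℝ) (hμ : 0 < μ) (hc : ∀ k, 0 ≤ c k)
    (h : ∀ k,
      (1/2) * G k k * (xh k)^2 - (b k - ∑ j ∈ Finset.univ.erase k, G k j * x j) * xh k
        + μ * |xh k| + (1/2) * c k * (xh k - x k)^2
      ≤ (1/2) * G k k * (x k)^2 - (b k - ∑ j ∈ Finset.univ.erase k, G k j * x j) * x k
        + μ * |x k|) :
    ((G.mulVec x - b) ⬝ᵥ (xh - x)) + μ * ((∑ i, |xh i|) - ∑ i, |x i|)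
      ≤ -∑ k, (G k k / 2 + c k / 2) * (xh k - x k)^2 := by
  have key : ∀ k ∈ Finset.univ, ((∑ j, G k j * x j) - b k) * (xh k - x k) + μ * (|xh k| - |x k|)
      ≤ -((G k k / 2 + c k / 2) * (xh k - x k)^2) := by
    intro k _
    have hk := h k
    have hsplit : (∑ j, G k j * x j) = G k k * x k + ∑ j ∈ Finset.univ.erase k, G k j * x j :=
      (Finset.add_sum_erase _ _ (Finset.mem_univ k)).symm
    rw [hsplit]
    ring_nf at hk ⊢
    linarith
  have hL : ((G.mulVec x - b) ⬝ᵥ (xh - x)) + μ * ((∑ i, |xh i|) - ∑ i, |x i|)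
      = ∑ k, (((∑ j, G k j * x j) - b k) * (xh k - x k) + μ * (|xh k| - |x k|)) := by
    simp only [dotProduct, Matrix.mulVec, Pi.sub_apply, Finset.sum_add_distrib,
      ← Finset.sum_sub_distrib, Finset.mul_sum]
  rw [hL, ← Finset.sum_neg_distrib]
  exact Finset.sum_le_sum key
end

section
/- Let G be symmetric positive semidefinite, b ∈ ℝ^K, μ > 0, L(x) = (1/2)xᵀGx - bᵀx + μ‖x‖₁, and suppose d := x̂ - x satisfies (Gx - b)ᵀd + μ(‖x̂‖₁ - ‖x‖₁) ≤ -c‖d‖₂² for some c > 0 (descent condition from the best response). Let λ̄ ≥ λ_max(G). Then for γ = min(c/λ̄, 1) one has L(x + γd) - L(x) ≤ -η‖d‖₂² where η = min(c²/(2λ̄), c/2) > 0. -/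
open Matrix

lemma quad_bound (K : ℕ) (G : Matrix (Fin K) (Fin K) ℝ) (hG : G.PosSemidef) (lam : ℝ)
    (hl : ∀ i, hG.1.eigenvalues i ≤ lam) (v : Fin K → ℝ) :
    v ⬝ᵥ G.mulVec v ≤ lam * ∑ i, (v i)^2 := by
  set U := (hG.1.eigenvectorUnitary : Matrix (Fin K) (Fin K) ℝ) with hUdef
  have hU : U * star U = 1 := mem_unitaryGroup_iff.mp hG.1.eigenvectorUnitary.2
  have hdecomp : lam • (1 : Matrix (Fin K) (Fin K) ℝ) - G
      = U * diagonal (fun i => lam - hG.1.eigenvalues i) * star U := by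
    have hspec := hG.1.spectral_theorem
    rw [Unitary.conjStarAlgAut_apply] at hspec
    have hdiag : (diagonal (fun i => lam - hG.1.eigenvalues i) : Matrix (Fin K) (Fin K) ℝ)
        = lam • 1 - diagonal (RCLike.ofReal ∘ hG.1.eigenvalues) := by
      ext i j
      by_cases h : i = j <;> simp [h, Matrix.one_apply]
    rw [hdiag, Matrix.mul_sub, Matrix.sub_mul, ← hspec, Matrix.mul_smul, mul_one,
      Matrix.smul_mul, hU]
  have hpsd : (lam • (1 : Matrix (Fin K) (Fin K) ℝ) - G).PosSemidef := by
    rw [hdecomp, Matrix.star_eq_conjTranspose]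
    exact (posSemidef_diagonal_iff.mpr (fun i => sub_nonneg.mpr (hl i))).mul_mul_conjTranspose_same U
  have h2 := hpsd.dotProduct_mulVec_nonneg v
  simp only [star_trivial] at h2
  have h3 : v ⬝ᵥ (lam • (1 : Matrix (Fin K) (Fin K) ℝ) - G) *ᵥ v
      = lam * ∑ i, (v i)^2 - v ⬝ᵥ G.mulVec v := by
    rw [sub_mulVec, dotProduct_sub, smul_mulVec, one_mulVec, dotProduct_smul]
    simp [dotProduct, pow_two, smul_eq_mul]
  linarith [h2, h3 ▸ h2]

theorem stmt_17 (K : ℕ) (hK : 0 < K) (G : Matrix (Fin K) (Fin K) ℝ) (hG : G.PosSemidef)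
    (b x xh : Fin K → ℝ) (μ c lam : ℝ) (hμ : 0 < μ) (hc : 0 < c) (hlam0 : 0 < lam)
    (hlam : Finset.univ.sup' (Finset.univ_nonempty_iff.mpr ⟨⟨0, hK⟩⟩) hG.1.eigenvalues ≤ lam)
    (hdesc : ((G.mulVec x - b) ⬝ᵥ (xh - x)) + μ * ((∑ i, |xh i|) - ∑ i, |x i|)
        ≤ -c * ∑ i, (xh i - x i)^2) :
    let γ := min (c / lam) 1
    let η := min (c^2 / (2 * lam)) (c / 2)
    0 < η ∧
    ((1/2) * ((x + γ • (xh - x)) ⬝ᵥ G.mulVec (x + γ • (xh - x)))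
        - b ⬝ᵥ (x + γ • (xh - x)) + μ * ∑ i, |(x + γ • (xh - x)) i|)
      - ((1/2) * (x ⬝ᵥ G.mulVec x) - b ⬝ᵥ x + μ * ∑ i, |x i|)
    ≤ -η * ∑ i, (xh i - x i)^2 := by
  intro γ η
  have hγ_def : γ = min (c / lam) 1 := rfl
  have hη_def : η = min (c^2 / (2 * lam)) (c / 2) := rfl
  set d : Fin K → ℝ := xh - x with hd
  set S : ℝ := ∑ i, (xh i - x i)^2 with hS
  clear_value γ η d S
  have hSnn : 0 ≤ S := by rw [hS]; exact Finset.sum_nonneg fun i _ => sq_nonneg _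
  have hγ0 : 0 < γ := hγ_def ▸ lt_min (div_pos hc hlam0) one_pos
  have hγ1 : γ ≤ 1 := hγ_def ▸ min_le_right _ _
  have hη : 0 < η := hη_def ▸ lt_min (div_pos (pow_pos hc 2) (by linarith)) (by linarith)
  refine ⟨hη, ?_⟩
  have hl : ∀ i, hG.1.eigenvalues i ≤ lam := fun i =>
    le_trans (Finset.le_sup' _ (Finset.mem_univ i)) hlam
  have hdS : ∑ i, (d i)^2 = S := by simp [hd, hS]
  have hq : d ⬝ᵥ G.mulVec d ≤ lam * S := by
    have := quad_bound K G hG lam hl d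
    rwa [hdS] at this
  have hGT : Gᵀ = G := by
    have h := hG.1
    rw [Matrix.IsHermitian] at h
    rw [← h]; ext i j
    simpa [conjTranspose_apply] using (congrFun (congrFun h j) i)
  have hsymm : x ⬝ᵥ G.mulVec d = d ⬝ᵥ G.mulVec x := by
    rw [dotProduct_mulVec, ← mulVec_transpose, hGT, dotProduct_comm]
  have hexp : (x + γ • d) ⬝ᵥ G.mulVec (x + γ • d)
      = x ⬝ᵥ G.mulVec x + 2*γ*(d ⬝ᵥ G.mulVec x) + γ^2*(d ⬝ᵥ G.mulVec d) := by
    simp only [mulVec_add, mulVec_smul, dotProduct_add, dotProduct_smul, add_dotProduct,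
      smul_dotProduct, smul_eq_mul]
    rw [hsymm]; ring
  have hb : b ⬝ᵥ (x + γ • d) = b ⬝ᵥ x + γ * (b ⬝ᵥ d) := by
    simp only [dotProduct_add, dotProduct_smul, smul_eq_mul]
  have habs : ∑ i, |(x + γ • d) i| ≤ (1-γ) * ∑ i, |x i| + γ * ∑ i, |xh i| := by
    rw [Finset.mul_sum, Finset.mul_sum, ← Finset.sum_add_distrib]
    apply Finset.sum_le_sum
    intro i _
    have h1 : (x + γ • d) i = (1-γ) * x i + γ * xh i := by
      simp only [Pi.add_apply, Pi.smul_apply, hd, Pi.sub_apply, smul_eq_mul]; ring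
    rw [h1]
    calc |(1-γ)*x i + γ*xh i| ≤ |(1-γ)*x i| + |γ*xh i| := abs_add_le _ _
      _ = (1-γ)*|x i| + γ*|xh i| := by
          rw [abs_mul, abs_mul, abs_of_nonneg (by linarith : (0:ℝ) ≤ 1-γ),
            abs_of_nonneg hγ0.le]
  have hdesc' : (d ⬝ᵥ G.mulVec x) - b ⬝ᵥ d + μ * ((∑ i, |xh i|) - ∑ i, |x i|) ≤ -c * S := by
    have h2 : (G.mulVec x - b) ⬝ᵥ d = (d ⬝ᵥ G.mulVec x) - b ⬝ᵥ d := by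
      rw [sub_dotProduct, dotProduct_comm]
    rw [← h2]; exact hdesc
  have key : γ * ((d ⬝ᵥ G.mulVec x) - b ⬝ᵥ d + μ * ((∑ i, |xh i|) - ∑ i, |x i|))
      ≤ γ * (-c * S) := by
    exact mul_le_mul_of_nonneg_left hdesc' hγ0.le
  have hmain : ((1/2) * ((x + γ • d) ⬝ᵥ G.mulVec (x + γ • d))
        - b ⬝ᵥ (x + γ • d) + μ * ∑ i, |(x + γ • d) i|)
      - ((1/2) * (x ⬝ᵥ G.mulVec x) - b ⬝ᵥ x + μ * ∑ i, |x i|)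
      ≤ γ * (-c * S) + γ^2/2 * (lam * S) := by
    rw [hexp, hb]
    have habs' : μ * ∑ i, |(x + γ • d) i| - μ * ∑ i, |x i|
        ≤ γ * (μ * ((∑ i, |xh i|) - ∑ i, |x i|)) := by
      linarith [mul_le_mul_of_nonneg_left habs hμ.le]
    linarith [key, habs', mul_le_mul_of_nonneg_left hq (by positivity : (0:ℝ) ≤ γ^2/2)]
  refine hmain.trans ?_
  have hfinal : γ * (-c * S) + γ^2/2 * (lam * S) ≤ -η * S := by
    rcases le_or_gt c lam with hcl | hcl
    · have hγeq : γ = c / lam := hγ_def.trans <| min_eq_left (by rw [div_le_one hlam0]; exact hcl)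
      have hγlam : γ * lam = c := by rw [hγeq]; field_simp
      have hηle : η ≤ c^2 / (2*lam) := hη_def ▸ min_le_left _ _
      have heq : c^2/(2*lam) = γ * c / 2 := by rw [hγeq]; field_simp
      have h1 : η ≤ γ * c / 2 := heq ▸ hηle
      have h2 : γ^2/2 * (lam * S) = γ * c / 2 * S := by rw [← hγlam]; ring
      have h3 : η * S ≤ γ * c / 2 * S := mul_le_mul_of_nonneg_right h1 hSnn
      linarith [h2, h3]
    · have hγeq : γ = 1 := hγ_def.trans <| min_eq_right ((one_le_div hlam0).mpr hcl.le)
      have hηle : η ≤ c / 2 := hη_def ▸ min_le_right _ _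
      rw [hγeq]
      have h3 : η * S ≤ c/2 * S := mul_le_mul_of_nonneg_right hηle hSnn
      have h4 : lam * S ≤ c * S := mul_le_mul_of_nonneg_right hcl.le hSnn
      linarith
  exact hfinal
end
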